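/- The restriction of h to the interior of Ξ is a homeomorphism onto E \ Γ, where Γ = {h(π/2, ξ) : ξ ∈ ℝ} is a logarithmic spiral; in particular E \ Γ is open. -/

import Mathlib

open Topology

/-- The map `h(η, ξ) = exp(−√3(η + ξ) + iξ)`. -/
noncomputable def hfun (p : ℝ × ℝ) : ℂ :=
  Complex.exp ((-(Real.sqrt 3) * (p.1 + p.2) : ℝ) + Complex.I * (p.2 : ℂ))

/-- The interior of the trapezoid `Ξ`: `{(η, ξ) : −3π/2 < η < π/2, ξ < −η}`. -/
def XiInt : Set (ℝ × ℝ) :=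
  {p : ℝ × ℝ | -(3 * Real.pi / 2) < p.1 ∧ p.1 < Real.pi / 2 ∧ p.2 < -p.1}

/-- The logarithmic spiral `Γ = {h(π/2, ξ) : ξ ∈ ℝ}`. -/
noncomputable def Gammaspiral : Set ℂ :=
  Set.range (fun ξ : ℝ => hfun (Real.pi / 2, ξ))

lemma hfun_eq_aux {p q : ℝ × ℝ} (h : hfun p = hfun q) :
    ∃ n : ℤ, p.1 = q.1 - 2 * Real.pi * n ∧ p.2 = q.2 + 2 * Real.pi * n := by
  rw [hfun, hfun, Complex.exp_eq_exp_iff_exists_int] at h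
  obtain ⟨n, hn⟩ := h
  have him := congrArg Complex.im hn
  have hre := congrArg Complex.re hn
  simp at him hre
  exact ⟨n, by linarith, by linarith⟩

lemma abs_hfun (p : ℝ × ℝ) :
    ‖hfun p‖ = Real.exp (-(Real.sqrt 3) * (p.1 + p.2)) := by
  rw [hfun, Complex.norm_exp]; simp

lemma isOpen_XiInt : IsOpen XiInt := by
  have h1 : IsOpen {p : ℝ × ℝ | -(3 * Real.pi / 2) < p.1} :=
    isOpen_lt continuous_const continuous_fst
  have h2 : IsOpen {p : ℝ × ℝ | p.1 < Real.pi / 2} := isOpen_lt continuous_fst continuous_const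
  have h3 : IsOpen {p : ℝ × ℝ | p.2 < -p.1} := isOpen_lt continuous_snd continuous_fst.neg
  exact (h1.inter (h2.inter h3) : _)

/-- The linear part of `hfun` as a homeomorphism `ℝ × ℝ ≃ₜ ℂ`. -/
noncomputable def gHomeo : (ℝ × ℝ) ≃ₜ ℂ where
  toFun p := ((-(Real.sqrt 3) * (p.1 + p.2) : ℝ) + Complex.I * (p.2 : ℂ))
  invFun z := (-z.re / Real.sqrt 3 - z.im, z.im)
  left_inv p := by
    have h3 : Real.sqrt 3 ≠ 0 := (Real.sqrt_pos.2 (by norm_num)).ne'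
    ext
    · simp
    · simp
  right_inv z := by
    have h3 : Real.sqrt 3 ≠ 0 := (Real.sqrt_pos.2 (by norm_num)).ne'
    apply Complex.ext
    · simp; field_simp
    · simp
  continuous_toFun := by
    apply Continuous.add
    · exact Complex.continuous_ofReal.comp (by continuity)
    · exact continuous_const.mul (Complex.continuous_ofReal.comp continuous_snd)
  continuous_invFun := by
    apply Continuous.prodMk
    · exact ((Complex.continuous_re.neg.div_const _).sub Complex.continuous_im)
    · exact Complex.continuous_im

lemma hfun_eq_comp : hfun = Complex.exp ∘ gHomeo := rfl

lemma isOpenMap_hfun : IsOpenMap hfun := by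
  rw [hfun_eq_comp]
  exact Complex.isOpenMap_exp.comp gHomeo.isOpenMap

lemma continuous_hfun : Continuous hfun := by
  rw [hfun_eq_comp]; exact Complex.continuous_exp.comp gHomeo.continuous

lemma injOn_hfun : Set.InjOn hfun XiInt := by
  rintro p hp q hq h
  obtain ⟨n, h1, h2⟩ := hfun_eq_aux h
  obtain ⟨hp1, hp2, -⟩ := hp
  obtain ⟨hq1, hq2, -⟩ := hq
  have hπ := Real.pi_pos
  have hn : n = 0 := by
    rcases lt_trichotomy n 0 with h | h | h
    · have : (n:ℝ) ≤ -1 := by exact_mod_cast Int.le_of_lt_add_one (by omega : n < -1 + 1)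
      nlinarith
    · exact h
    · have : (1:ℝ) ≤ n := by exact_mod_cast h
      nlinarith
  subst hn
  simp at h1 h2
  exact Prod.ext h1 h2

lemma exists_int_mem_Ico (a θ c : ℝ) (hc : 0 < c) :
    ∃ k : ℤ, a ≤ θ + c * k ∧ θ + c * k < a + c := by
  refine ⟨⌈(a - θ) / c⌉, ?_, ?_⟩
  · have h := Int.le_ceil ((a - θ) / c)
    rw [div_le_iff₀ hc] at h
    linarith
  · have h := Int.ceil_lt_add_one ((a - θ) / c)
    have h2 : (⌈(a - θ) / c⌉ : ℝ) * c < ((a - θ) / c + 1) * c :=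
      mul_lt_mul_of_pos_right h hc
    rw [add_mul, div_mul_cancel₀ _ hc.ne'] at h2
    linarith

/-- Surjectivity onto `E` allowing the right boundary `η = π/2`. -/
lemma hfun_surj_aux {v : ℂ} (hv : 1 < ‖v‖) :
    ∃ p : ℝ × ℝ, -(3 * Real.pi / 2) < p.1 ∧ p.1 ≤ Real.pi / 2 ∧ p.2 < -p.1 ∧ hfun p = v := by
  have h3pos : (0:ℝ) < Real.sqrt 3 := Real.sqrt_pos.2 (by norm_num)
  have hπ := Real.pi_pos
  have hv0 : v ≠ 0 := by
    intro h; rw [h] at hv; simp at hv; linarith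
  have hLpos : 0 < Real.log (‖v‖) := Real.log_pos hv
  obtain ⟨k, hk1, hk2⟩ := exists_int_mem_Ico
    (-(Real.log (‖v‖)) / Real.sqrt 3 - Real.pi / 2) (Complex.arg v)
    (2 * Real.pi) (by positivity)
  refine ⟨(-(Real.log (‖v‖)) / Real.sqrt 3 - (Complex.arg v + 2 * Real.pi * k),
          Complex.arg v + 2 * Real.pi * k), ?_, ?_, ?_, ?_⟩
  · have : 0 < Real.log (‖v‖) / Real.sqrt 3 := by positivity
    simp only
    nlinarith [hk2]
  · simp only
    linarith [hk1]
  · have h1 : -Real.log (‖v‖) / Real.sqrt 3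
        = -(Real.log (‖v‖) / Real.sqrt 3) := by ring
    have h2 : 0 < Real.log (‖v‖) / Real.sqrt 3 := by positivity
    simp only [h1]
    linarith
  · rw [hfun]
    simp only
    have hre : -(Real.sqrt 3) *
        ((-(Real.log (‖v‖)) / Real.sqrt 3 - (Complex.arg v + 2 * Real.pi * k))
          + (Complex.arg v + 2 * Real.pi * k)) = Real.log (‖v‖) := by
      field_simp
      ring
    rw [hre]
    push_cast
    rw [show ((Real.log (‖v‖) : ℂ) + Complex.I * (↑(Complex.arg v) + 2 * ↑Real.pi * ↑k))
        = ((Real.log (‖v‖) : ℂ) + ↑(Complex.arg v) * Complex.I)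
          + ↑(k : ℤ) * (2 * ↑Real.pi * Complex.I) by push_cast; ring,
      Complex.exp_add, Complex.exp_int_mul_two_pi_mul_I, mul_one, Complex.exp_add,
      ← Complex.ofReal_exp, Real.exp_log (norm_pos_iff.mpr hv0),
      Complex.norm_mul_exp_arg_mul_I]

lemma image_hfun_XiInt :
    hfun '' XiInt = {v : ℂ | 1 < ‖v‖} \ Gammaspiral := by
  have h3pos : (0:ℝ) < Real.sqrt 3 := Real.sqrt_pos.2 (by norm_num)
  have hπ := Real.pi_pos
  ext v
  constructor
  · rintro ⟨p, hp, rfl⟩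
    obtain ⟨hp1, hp2, hp3⟩ := hp
    constructor
    · rw [Set.mem_setOf_eq, abs_hfun, Real.one_lt_exp_iff]
      nlinarith
    · rintro ⟨ξ, hξ⟩
      obtain ⟨n, h1, h2⟩ := hfun_eq_aux hξ.symm
      simp only at h1 h2
      have hn : n ≥ 1 := by
        by_contra hn
        push_neg at hn
        have : (n:ℝ) ≤ 0 := by exact_mod_cast (by omega : n ≤ 0)
        nlinarith
      have : (1:ℝ) ≤ n := by exact_mod_cast hn
      nlinarith
  · rintro ⟨hv, hvΓ⟩
    rw [Set.mem_setOf_eq] at hv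
    obtain ⟨p, hp1, hp2, hp3, hmap⟩ := hfun_surj_aux hv
    rcases lt_or_eq_of_le hp2 with h | h
    · exact ⟨p, ⟨hp1, h, hp3⟩, hmap⟩
    · exfalso
      apply hvΓ
      refine ⟨p.2, ?_⟩
      have hpe : (Real.pi / 2, p.2) = p := Prod.ext h.symm rfl
      show hfun (Real.pi / 2, p.2) = v
      rw [hpe, hmap]

/-- `h` restricted to the interior of `Ξ` is a homeomorphism onto
`E \ Γ`, where `E = {|v| > 1}`; in particular `E \ Γ` is open. -/
theorem hfun_interior_homeomorphism :
    IsOpen ({v : ℂ | 1 < ‖v‖} \ Gammaspiral) ∧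
    ∃ e : XiInt ≃ₜ ({v : ℂ | 1 < ‖v‖} \ Gammaspiral : Set ℂ),
      ∀ p : XiInt, (e p : ℂ) = hfun (p : ℝ × ℝ) := by
  have himg := image_hfun_XiInt
  constructor
  · rw [← himg]; exact isOpenMap_hfun _ isOpen_XiInt
  · set f : XiInt → ℂ := fun p => hfun p with hf
    have hcont : Continuous f := continuous_hfun.comp continuous_subtype_val
    have hinj : Function.Injective f := fun p q h =>
      Subtype.ext (injOn_hfun p.2 q.2 h)
    have hopen : IsOpenMap f := by
      intro U hU
      obtain ⟨V, hV, rfl⟩ := isOpen_induced_iff.1 hU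
      have himeq : f '' (Subtype.val ⁻¹' V) = hfun '' (V ∩ XiInt) := by
        ext z
        constructor
        · rintro ⟨⟨x, hx⟩, hxV, rfl⟩; exact ⟨x, ⟨hxV, hx⟩, rfl⟩
        · rintro ⟨x, ⟨hxV, hx⟩, rfl⟩; exact ⟨⟨x, hx⟩, hxV, rfl⟩
      rw [himeq]
      exact isOpenMap_hfun _ (hV.inter isOpen_XiInt)
    have hemb : IsOpenEmbedding f :=
      IsOpenEmbedding.of_continuous_injective_isOpenMap hcont hinj hopen
    have hrange : Set.range f = {v : ℂ | 1 < ‖v‖} \ Gammaspiral := by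
      rw [← himg, ← Set.image_eq_range]
    exact ⟨hemb.isEmbedding.toHomeomorph.trans (Homeomorph.setCongr hrange),
      fun p => rfl⟩
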